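/- Let $k$ be an algebraically closed field with $\mathrm{char}(k)=3$, $A=k[[t^3]]\subset B=k[[t]]$, and let $V\subset B$ be an $A$-submodule with $B/V\cong k$ as $k$-vector spaces. Then in $B\otimes_A B$, with $\delta=t\otimes 1-1\otimes t$: (a) $\delta^2\notin V\otimes_A B$; (b) $\delta^2 t\in V\otimes_A B$ if and only if $\{t,t^2\}\subset V$; (c) $\delta^2 t^2\in V\otimes_A B$ if and only if $t^2\in V$; (d) $\delta^2 t^3\in V\otimes_A B$. -/

import Mathlib

/-!
Statement 17: Let `k` be an algebraically closed field with `char k = 3`,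
`A = k[[t³]] ⊆ B = k[[t]]`, and let `V ⊆ B` be an `A`-submodule with `B/V ≅ k` as
`k`-vector spaces. Then in `B ⊗_A B`, with `δ = t⊗1 - 1⊗t`:
(a) `δ² ∉ V ⊗_A B`; (b) `δ²t ∈ V ⊗_A B ↔ {t, t²} ⊆ V`;
(c) `δ²t² ∈ V ⊗_A B ↔ t² ∈ V`; (d) `δ²t³ ∈ V ⊗_A B`.
(Here `δ²tⁱ` denotes `δ² · (1 ⊗ tⁱ)`, as in the source computation, and `V ⊗_A B`
denotes the image of `V ⊗_A B → B ⊗_A B`.)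
-/

open scoped TensorProduct

set_option synthInstance.maxHeartbeats 1000000
set_option maxHeartbeats 1000000

noncomputable section

/-- The subalgebra `A = k[[t³]] ⊆ k[[t]]`: power series supported in degrees divisible
by `3`. -/
def cubesSubalgebra (k : Type) [Field k] : Subalgebra k (PowerSeries k) where
  carrier := {f | ∀ n : ℕ, ¬ (3 ∣ n) → PowerSeries.coeff (R := k) n f = 0}
  add_mem' := by
    intro f g hf hg n hn
    simp [map_add, hf n hn, hg n hn]
  mul_mem' := by
    intro f g hf hg n hn
    rw [PowerSeries.coeff_mul]
    refine Finset.sum_eq_zero fun ij hij => ?_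
    have hsum := Finset.HasAntidiagonal.mem_antidiagonal.mp hij
    by_cases h1 : (3 : ℕ) ∣ ij.1
    · have h2 : ¬ (3 : ℕ) ∣ ij.2 := fun h2 => hn (hsum ▸ dvd_add h1 h2)
      rw [hg ij.2 h2, mul_zero]
    · rw [hf ij.1 h1, zero_mul]
  algebraMap_mem' := by
    intro a n hn
    have hn0 : n ≠ 0 := fun h => hn (h ▸ dvd_zero 3)
    simp [PowerSeries.algebraMap_apply, PowerSeries.coeff_C, hn0]

/-- `δ = t ⊗ 1 - 1 ⊗ t` in `k[[t]] ⊗_{k[[t³]]} k[[t]]`. -/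
def deltaTensor (k : Type) [Field k] :
    PowerSeries k ⊗[cubesSubalgebra k] PowerSeries k :=
  PowerSeries.X ⊗ₜ[cubesSubalgebra k] 1 - 1 ⊗ₜ[cubesSubalgebra k] PowerSeries.X

/-- The image of `V ⊗_A B` in `B ⊗_A B`. -/
def tensorImage (k : Type) [Field k]
    (V : Submodule (cubesSubalgebra k) (PowerSeries k)) :
    Submodule (cubesSubalgebra k)
      (PowerSeries k ⊗[cubesSubalgebra k] PowerSeries k) :=
  LinearMap.range (TensorProduct.map V.subtype
    (LinearMap.id : PowerSeries k →ₗ[cubesSubalgebra k] PowerSeries k))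

namespace S17

variable {k : Type} [Field k]

lemma X3_mem : (PowerSeries.X : PowerSeries k) ^ 3 ∈ cubesSubalgebra k := by
  intro n hn
  rw [PowerSeries.coeff_X_pow]
  have : n ≠ 3 := by rintro rfl; exact hn ⟨1, rfl⟩
  simp [this]

lemma coe_smul (a : cubesSubalgebra k) (b : PowerSeries k) :
    a • b = (a : PowerSeries k) * b := rfl

lemma C_mem (c : k) : PowerSeries.C (R := k) c ∈ cubesSubalgebra k := by
  have := (cubesSubalgebra k).algebraMap_mem c
  simpa [PowerSeries.algebraMap_apply] using this

lemma exists_X3_dvd (a : cubesSubalgebra k) :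
    ∃ d, (a : PowerSeries k) - PowerSeries.C (R := k) (PowerSeries.coeff (R := k) 0 (a : PowerSeries k))
      = PowerSeries.X ^ 3 * d := by
  have h : (PowerSeries.X : PowerSeries k) ^ 3 ∣
      (a : PowerSeries k) - PowerSeries.C (R := k) (PowerSeries.coeff (R := k) 0 (a : PowerSeries k)) := by
    rw [PowerSeries.X_pow_dvd_iff]
    intro m hm
    interval_cases m
    · simp
    · have h1 : PowerSeries.coeff (R := k) 1 (a : PowerSeries k) = 0 := a.2 1 (by omega)
      simp [h1, PowerSeries.coeff_C]
    · have h2 : PowerSeries.coeff (R := k) 2 (a : PowerSeries k) = 0 := a.2 2 (by omega)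
      simp [h2, PowerSeries.coeff_C]
  exact h

lemma coeff_subalgebra_mul (a : cubesSubalgebra k) (b : PowerSeries k) (j : ℕ) (hj : j < 3) :
    PowerSeries.coeff (R := k) j ((a : PowerSeries k) * b)
      = PowerSeries.coeff (R := k) 0 (a : PowerSeries k) * PowerSeries.coeff (R := k) j b := by
  rw [PowerSeries.coeff_mul]
  rw [Finset.sum_eq_single_of_mem ((0:ℕ), j) (Finset.HasAntidiagonal.mem_antidiagonal.mpr (by simp))]
  rintro ⟨i, l⟩ hmem hne
  have hil : i + l = j := Finset.HasAntidiagonal.mem_antidiagonal.mp hmem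
  rcases Nat.eq_zero_or_pos i with rfl | hpos
  · simp only [Nat.zero_add] at hil
    exact absurd (by simp [hil]) hne
  · have hz : PowerSeries.coeff (R := k) i (a : PowerSeries k) = 0 := by
      refine a.2 i fun hd => ?_
      have := Nat.le_of_dvd hpos hd
      omega
    rw [hz, zero_mul]



lemma coe_algebraMap (c : k) :
    ((algebraMap k (cubesSubalgebra k) c : cubesSubalgebra k) : PowerSeries k)
      = PowerSeries.C (R := k) c := by
  simp [PowerSeries.algebraMap_apply]

variable (V : Submodule (cubesSubalgebra k) (PowerSeries k))

lemma smul_mk_eq (h3 : ∀ b : PowerSeries k, PowerSeries.X ^ 3 * b ∈ V)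
    (a : cubesSubalgebra k) (q : PowerSeries k ⧸ V) :
    a • q = algebraMap k (cubesSubalgebra k)
      (PowerSeries.coeff (R := k) 0 (a : PowerSeries k)) • q := by
  obtain ⟨x, rfl⟩ := Submodule.Quotient.mk_surjective V q
  rw [← Submodule.Quotient.mk_smul, ← Submodule.Quotient.mk_smul]
  refine (Submodule.Quotient.eq V).mpr ?_
  obtain ⟨d, hd⟩ := exists_X3_dvd a
  have heq : a • x - algebraMap k (cubesSubalgebra k)
      (PowerSeries.coeff (R := k) 0 (a : PowerSeries k)) • x = PowerSeries.X ^ 3 * (d * x) := by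
    rw [coe_smul, coe_smul, coe_algebraMap, ← sub_mul, hd, mul_assoc]
  rw [heq]
  exact h3 _

def phi (h3 : ∀ b : PowerSeries k, PowerSeries.X ^ 3 * b ∈ V) (j : ℕ) (hj : j < 3) :
    PowerSeries k ⊗[cubesSubalgebra k] PowerSeries k →ₗ[cubesSubalgebra k]
      (PowerSeries k ⧸ V) :=
  TensorProduct.lift <| LinearMap.mk₂ (cubesSubalgebra k)
    (fun b b' => algebraMap k (cubesSubalgebra k) (PowerSeries.coeff (R := k) j b') •
      Submodule.Quotient.mk b)
    (fun m₁ m₂ n => by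
      rw [Submodule.Quotient.mk_add, smul_add])
    (fun a m n => by
      rw [Submodule.Quotient.mk_smul, ← mul_smul, mul_comm, mul_smul])
    (fun m n₁ n₂ => by
      rw [map_add, map_add, add_smul])
    (fun a m n => by
      rw [coe_smul, coeff_subalgebra_mul a n j hj, map_mul, mul_smul, ← smul_mk_eq V h3 a])

lemma phi_tmul (h3 : ∀ b : PowerSeries k, PowerSeries.X ^ 3 * b ∈ V) (j : ℕ) (hj : j < 3)
    (b b' : PowerSeries k) :
    phi V h3 j hj (b ⊗ₜ[cubesSubalgebra k] b')
      = algebraMap k (cubesSubalgebra k) (PowerSeries.coeff (R := k) j b') •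
        Submodule.Quotient.mk b := by
  rfl

lemma phi_pow (h3 : ∀ b : PowerSeries k, PowerSeries.X ^ 3 * b ∈ V) (j : ℕ) (hj : j < 3)
    (m n : ℕ) :
    phi V h3 j hj ((PowerSeries.X ^ m) ⊗ₜ[cubesSubalgebra k] (PowerSeries.X ^ n))
      = if j = n then Submodule.Quotient.mk (PowerSeries.X ^ m) else 0 := by
  rw [phi_tmul, PowerSeries.coeff_X_pow]
  split_ifs with h
  · simp
  · simp

lemma mem_tensorImage_iff (z : PowerSeries k ⊗[cubesSubalgebra k] PowerSeries k) :
    z ∈ tensorImage k V ↔ ∃ y, TensorProduct.map V.subtype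
      (LinearMap.id : PowerSeries k →ₗ[cubesSubalgebra k] PowerSeries k) y = z :=
  LinearMap.mem_range

lemma phi_image (h3 : ∀ b : PowerSeries k, PowerSeries.X ^ 3 * b ∈ V) (j : ℕ) (hj : j < 3) :
    ∀ z ∈ tensorImage k V, phi V h3 j hj z = 0 := by
  intro z hz
  obtain ⟨y, rfl⟩ := (S17.mem_tensorImage_iff V z).mp hz
  clear hz
  induction y using TensorProduct.induction_on with
  | zero => simp
  | tmul v b =>
      simp [TensorProduct.map_tmul, phi_tmul, (Submodule.Quotient.mk_eq_zero V).mpr v.2]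
  | add y₁ y₂ ih₁ ih₂ => rw [map_add, map_add, ih₁, ih₂, add_zero]


lemma quot_all_zero_absurd
    (hV : Nonempty ((PowerSeries k ⧸ V.restrictScalars k) ≃ₗ[k] k))
    (hall : ∀ x : PowerSeries k ⧸ V.restrictScalars k, x = 0) : False := by
  obtain ⟨e⟩ := hV
  have h1 : (1 : k) = 0 := by
    calc (1:k) = e (e.symm 1) := (e.apply_symm_apply 1).symm
    _ = e 0 := by rw [hall (e.symm 1)]
    _ = 0 := map_zero e
  exact one_ne_zero h1

lemma not_all_mem (hV : Nonempty ((PowerSeries k ⧸ V.restrictScalars k) ≃ₗ[k] k))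
    (hall : ∀ b : PowerSeries k, b ∈ V) : False := by
  refine quot_all_zero_absurd V hV fun x => ?_
  obtain ⟨y, rfl⟩ := (V.restrictScalars k).mkQ_surjective x
  rw [Submodule.mkQ_apply]
  exact (Submodule.Quotient.mk_eq_zero _).mpr (hall y)

lemma X3_smul_mem (hV : Nonempty ((PowerSeries k ⧸ V.restrictScalars k) ≃ₗ[k] k)) :
    ∀ b : PowerSeries k, PowerSeries.X ^ 3 * b ∈ V := by
  obtain ⟨e⟩ := hV
  set Vk := V.restrictScalars k with hVk
  have hker_le : Vk ≤ LinearMap.ker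
      (Vk.mkQ ∘ₗ LinearMap.mulLeft k ((PowerSeries.X : PowerSeries k) ^ 3)) := by
    intro x hx
    have hx' : x ∈ V := hx
    have hmem : PowerSeries.X ^ 3 * x ∈ V := by
      have := V.smul_mem ⟨PowerSeries.X ^ 3, X3_mem⟩ hx'
      rwa [coe_smul] at this
    simp only [LinearMap.mem_ker, LinearMap.comp_apply, LinearMap.mulLeft_apply,
      Submodule.mkQ_apply]
    exact (Submodule.Quotient.mk_eq_zero _).mpr hmem
  set L := Vk.liftQ _ hker_le with hLdef
  have hLmk : ∀ x : PowerSeries k, L (Vk.mkQ x) = Vk.mkQ (PowerSeries.X ^ 3 * x) := by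
    intro x
    rw [hLdef, Submodule.mkQ_apply, Submodule.liftQ_apply]
    rfl
  set c := e (L (e.symm 1)) with hc0
  have hdec : ∀ x : PowerSeries k ⧸ Vk, x = e x • e.symm 1 := by
    intro x
    calc x = e.symm (e x) := (e.symm_apply_apply x).symm
    _ = e.symm (e x • (1:k)) := by rw [smul_eq_mul, mul_one]
    _ = e x • e.symm 1 := map_smul e.symm _ _
  have hL : ∀ x, L x = c • x := by
    intro x
    conv_lhs => rw [hdec x]
    rw [map_smul]
    conv_lhs => rw [hdec (L (e.symm 1)), ← hc0]
    rw [smul_comm, ← hdec x]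
  by_cases hc : c = 0
  · intro b
    have hb := hLmk b
    rw [hL, hc, zero_smul] at hb
    have h0 : Vk.mkQ (PowerSeries.X ^ 3 * b) = 0 := hb.symm
    rw [Submodule.mkQ_apply] at h0
    exact (Submodule.Quotient.mk_eq_zero Vk).mp h0
  · exfalso
    have hu : IsUnit ((PowerSeries.X : PowerSeries k) ^ 3 - PowerSeries.C (R := k) c) := by
      rw [PowerSeries.isUnit_iff_constantCoeff]
      simp only [map_sub, map_pow, PowerSeries.constantCoeff_X, PowerSeries.constantCoeff_C]
      rw [zero_pow (by norm_num : (3:ℕ) ≠ 0), zero_sub]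
      exact (neg_ne_zero.mpr hc).isUnit
    obtain ⟨u, hu'⟩ := hu
    have hzero : ∀ y : PowerSeries k,
        Vk.mkQ ((PowerSeries.X ^ 3 - PowerSeries.C (R := k) c) * y) = 0 := by
      intro y
      have h1 : Vk.mkQ (PowerSeries.X ^ 3 * y) = c • Vk.mkQ y := by rw [← hLmk, hL]
      have h2 : Vk.mkQ (PowerSeries.C (R := k) c * y) = c • Vk.mkQ y := by
        rw [show (PowerSeries.C (R := k) c) * y = c • y by
          rw [Algebra.smul_def]; congr 1, map_smul]
      rw [sub_mul, map_sub, h1, h2, sub_self]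
    refine quot_all_zero_absurd V ⟨e⟩ fun x => ?_
    obtain ⟨y, rfl⟩ := Vk.mkQ_surjective x
    calc Vk.mkQ y = Vk.mkQ ((PowerSeries.X ^ 3 - PowerSeries.C (R := k) c) * (↑u⁻¹ * y)) := by
          rw [← mul_assoc, ← hu', Units.mul_inv, one_mul]
    _ = 0 := hzero _

end S17

set_option maxHeartbeats 8000000
set_option synthInstance.maxHeartbeats 4000000

/-- Let `k` be an algebraically closed field with `char k = 3`,
`A = k[[t³]] ⊆ B = k[[t]]`, and `V ⊆ B` an `A`-submodule with `B/V ≅ k` as `k`-vector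
spaces. Then in `B ⊗_A B`, with `δ = t ⊗ 1 - 1 ⊗ t`: (a) `δ² ∉ V ⊗_A B`;
(b) `δ²·(1 ⊗ t) ∈ V ⊗_A B` iff `{t, t²} ⊆ V`; (c) `δ²·(1 ⊗ t²) ∈ V ⊗_A B` iff
`t² ∈ V`; (d) `δ²·(1 ⊗ t³) ∈ V ⊗_A B`. -/
theorem delta_sq_membership_in_tensor
    (k : Type) [Field k] [IsAlgClosed k] [CharP k 3]
    (V : Submodule (cubesSubalgebra k) (PowerSeries k))
    (hV : Nonempty ((PowerSeries k ⧸ V.restrictScalars k) ≃ₗ[k] k)) :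
    deltaTensor k ^ 2 ∉ tensorImage k V ∧
    (deltaTensor k ^ 2 * (1 ⊗ₜ[cubesSubalgebra k] PowerSeries.X) ∈ tensorImage k V ↔
      ((PowerSeries.X : PowerSeries k) ∈ V ∧
        (PowerSeries.X : PowerSeries k) ^ 2 ∈ V)) ∧
    (deltaTensor k ^ 2 * (1 ⊗ₜ[cubesSubalgebra k] PowerSeries.X ^ 2) ∈
        tensorImage k V ↔ (PowerSeries.X : PowerSeries k) ^ 2 ∈ V) ∧
    deltaTensor k ^ 2 * (1 ⊗ₜ[cubesSubalgebra k] PowerSeries.X ^ 3) ∈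
      tensorImage k V := by
  classical
  have h3 : ∀ b : PowerSeries k, PowerSeries.X ^ 3 * b ∈ V := S17.X3_smul_mem V hV
  have hB3 : (3 : PowerSeries k) = 0 := by
    have hk3 : (3 : k) = 0 := by exact_mod_cast CharP.cast_eq_zero k 3
    calc (3 : PowerSeries k) = algebraMap k (PowerSeries k) 3 := (map_ofNat _ 3).symm
    _ = algebraMap k (PowerSeries k) 0 := by rw [hk3]
    _ = 0 := map_zero _
  have hT3 : (3 : PowerSeries k ⊗[cubesSubalgebra k] PowerSeries k) = 0 := by
    have h111 : ((1 : PowerSeries k) + 1 + 1) = 0 := by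
      rw [show ((1 : PowerSeries k) + 1 + 1) = 3 by norm_num, hB3]
    calc (3 : PowerSeries k ⊗[cubesSubalgebra k] PowerSeries k) = 1 + 1 + 1 := by norm_num
    _ = (1 : PowerSeries k) ⊗ₜ[cubesSubalgebra k] (1 : PowerSeries k)
          + 1 ⊗ₜ[cubesSubalgebra k] 1 + 1 ⊗ₜ[cubesSubalgebra k] 1 := by
        rw [Algebra.TensorProduct.one_def]
    _ = ((1 : PowerSeries k) + 1 + 1) ⊗ₜ[cubesSubalgebra k] (1 : PowerSeries k) := by
        rw [TensorProduct.add_tmul, TensorProduct.add_tmul]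
    _ = 0 := by rw [h111, TensorProduct.zero_tmul]
  have hp : ∀ m n m' n' : ℕ,
      (((PowerSeries.X : PowerSeries k) ^ m) ⊗ₜ[cubesSubalgebra k] ((PowerSeries.X : PowerSeries k) ^ n) :
        PowerSeries k ⊗[cubesSubalgebra k] PowerSeries k)
        * (((PowerSeries.X : PowerSeries k) ^ m') ⊗ₜ[cubesSubalgebra k] ((PowerSeries.X : PowerSeries k) ^ n'))
      = ((PowerSeries.X : PowerSeries k) ^ (m + m')) ⊗ₜ[cubesSubalgebra k] ((PowerSeries.X : PowerSeries k) ^ (n + n')) := by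
    intro m n m' n'
    rw [Algebra.TensorProduct.tmul_mul_tmul, ← pow_add, ← pow_add]
  have hmove : ∀ m n : ℕ,
      (((PowerSeries.X : PowerSeries k) ^ m) ⊗ₜ[cubesSubalgebra k] ((PowerSeries.X : PowerSeries k) ^ (n + 3)) :
        PowerSeries k ⊗[cubesSubalgebra k] PowerSeries k)
      = ((PowerSeries.X : PowerSeries k) ^ (m + 3)) ⊗ₜ[cubesSubalgebra k] ((PowerSeries.X : PowerSeries k) ^ n) := by
    intro m n
    have h1 : ((PowerSeries.X : PowerSeries k) ^ (n + 3) : PowerSeries k)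
        = (⟨PowerSeries.X ^ 3, S17.X3_mem⟩ : cubesSubalgebra k) • PowerSeries.X ^ n := by
      rw [S17.coe_smul]; ring
    have h2 : (⟨PowerSeries.X ^ 3, S17.X3_mem⟩ : cubesSubalgebra k)
        • ((PowerSeries.X : PowerSeries k) ^ m : PowerSeries k) = PowerSeries.X ^ (m + 3) := by
      rw [S17.coe_smul]; ring
    rw [h1, TensorProduct.tmul_smul, TensorProduct.smul_tmul', h2]
  have hd : deltaTensor k ^ 2
      = ((PowerSeries.X : PowerSeries k) ^ 2) ⊗ₜ[cubesSubalgebra k] (1 : PowerSeries k)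
        + (PowerSeries.X : PowerSeries k) ⊗ₜ[cubesSubalgebra k] (PowerSeries.X : PowerSeries k)
        + (1 : PowerSeries k) ⊗ₜ[cubesSubalgebra k] ((PowerSeries.X : PowerSeries k) ^ 2) := by
    rw [deltaTensor]
    have ha : ((PowerSeries.X : PowerSeries k) ⊗ₜ[cubesSubalgebra k] (1 : PowerSeries k))
        * ((PowerSeries.X : PowerSeries k) ⊗ₜ[cubesSubalgebra k] (1 : PowerSeries k))
        = ((PowerSeries.X : PowerSeries k) ^ 2) ⊗ₜ[cubesSubalgebra k] (1 : PowerSeries k) := by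
      rw [Algebra.TensorProduct.tmul_mul_tmul, one_mul,
        show (PowerSeries.X * PowerSeries.X : PowerSeries k) = PowerSeries.X ^ 2 by ring]
    have hb : ((PowerSeries.X : PowerSeries k) ⊗ₜ[cubesSubalgebra k] (1 : PowerSeries k))
        * ((1 : PowerSeries k) ⊗ₜ[cubesSubalgebra k] (PowerSeries.X : PowerSeries k))
        = (PowerSeries.X : PowerSeries k) ⊗ₜ[cubesSubalgebra k] (PowerSeries.X : PowerSeries k) := by
      rw [Algebra.TensorProduct.tmul_mul_tmul, one_mul, mul_one]
    have hc : ((1 : PowerSeries k) ⊗ₜ[cubesSubalgebra k] (PowerSeries.X : PowerSeries k))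
        * ((1 : PowerSeries k) ⊗ₜ[cubesSubalgebra k] (PowerSeries.X : PowerSeries k))
        = (1 : PowerSeries k) ⊗ₜ[cubesSubalgebra k] ((PowerSeries.X : PowerSeries k) ^ 2) := by
      rw [Algebra.TensorProduct.tmul_mul_tmul, one_mul,
        show (PowerSeries.X * PowerSeries.X : PowerSeries k) = PowerSeries.X ^ 2 by ring]
    linear_combination ha - 2 * hb + hc
      - ((PowerSeries.X : PowerSeries k) ⊗ₜ[cubesSubalgebra k] (PowerSeries.X : PowerSeries k)) * hT3
  -- expansions of δ² * (1 ⊗ X^i)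
  have hE1 : deltaTensor k ^ 2 * ((1 : PowerSeries k) ⊗ₜ[cubesSubalgebra k] (PowerSeries.X : PowerSeries k))
      = ((PowerSeries.X : PowerSeries k) ^ 2) ⊗ₜ[cubesSubalgebra k] (PowerSeries.X : PowerSeries k)
        + (PowerSeries.X : PowerSeries k) ⊗ₜ[cubesSubalgebra k] ((PowerSeries.X : PowerSeries k) ^ 2)
        + (1 : PowerSeries k) ⊗ₜ[cubesSubalgebra k] ((PowerSeries.X : PowerSeries k) ^ 3) := by
    rw [hd, add_mul, add_mul]
    simp only [Algebra.TensorProduct.tmul_mul_tmul, one_mul, mul_one]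
    rw [show (PowerSeries.X * PowerSeries.X : PowerSeries k) = PowerSeries.X ^ 2 by ring,
      show ((PowerSeries.X : PowerSeries k) ^ 2 * PowerSeries.X : PowerSeries k) = PowerSeries.X ^ 3 by ring]
  have hE1' : deltaTensor k ^ 2 * ((1 : PowerSeries k) ⊗ₜ[cubesSubalgebra k] (PowerSeries.X : PowerSeries k))
      = ((PowerSeries.X : PowerSeries k) ^ 2) ⊗ₜ[cubesSubalgebra k] (PowerSeries.X : PowerSeries k)
        + (PowerSeries.X : PowerSeries k) ⊗ₜ[cubesSubalgebra k] ((PowerSeries.X : PowerSeries k) ^ 2)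
        + ((PowerSeries.X : PowerSeries k) ^ 3) ⊗ₜ[cubesSubalgebra k] (1 : PowerSeries k) := by
    have hm := hmove 0 0
    norm_num at hm
    rw [hE1, hm]
  have hE2 : deltaTensor k ^ 2
        * ((1 : PowerSeries k) ⊗ₜ[cubesSubalgebra k] ((PowerSeries.X : PowerSeries k) ^ 2))
      = ((PowerSeries.X : PowerSeries k) ^ 2) ⊗ₜ[cubesSubalgebra k] ((PowerSeries.X : PowerSeries k) ^ 2)
        + (PowerSeries.X : PowerSeries k) ⊗ₜ[cubesSubalgebra k] ((PowerSeries.X : PowerSeries k) ^ 3)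
        + (1 : PowerSeries k) ⊗ₜ[cubesSubalgebra k] ((PowerSeries.X : PowerSeries k) ^ 4) := by
    rw [hd, add_mul, add_mul]
    simp only [Algebra.TensorProduct.tmul_mul_tmul, one_mul, mul_one]
    rw [show (PowerSeries.X * PowerSeries.X ^ 2 : PowerSeries k) = PowerSeries.X ^ 3 by ring,
      show ((PowerSeries.X : PowerSeries k) ^ 2 * PowerSeries.X ^ 2 : PowerSeries k) = PowerSeries.X ^ 4 by ring]
  have hE2' : deltaTensor k ^ 2
        * ((1 : PowerSeries k) ⊗ₜ[cubesSubalgebra k] ((PowerSeries.X : PowerSeries k) ^ 2))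
      = ((PowerSeries.X : PowerSeries k) ^ 2) ⊗ₜ[cubesSubalgebra k] ((PowerSeries.X : PowerSeries k) ^ 2)
        + ((PowerSeries.X : PowerSeries k) ^ 4) ⊗ₜ[cubesSubalgebra k] (1 : PowerSeries k)
        + ((PowerSeries.X : PowerSeries k) ^ 3) ⊗ₜ[cubesSubalgebra k] (PowerSeries.X : PowerSeries k) := by
    have hm1 := hmove 1 0
    have hm2 := hmove 0 1
    norm_num at hm1 hm2
    rw [hE2, hm1, hm2]
  have hE3 : deltaTensor k ^ 2
        * ((1 : PowerSeries k) ⊗ₜ[cubesSubalgebra k] ((PowerSeries.X : PowerSeries k) ^ 3))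
      = ((PowerSeries.X : PowerSeries k) ^ 5) ⊗ₜ[cubesSubalgebra k] (1 : PowerSeries k)
        + ((PowerSeries.X : PowerSeries k) ^ 4) ⊗ₜ[cubesSubalgebra k] (PowerSeries.X : PowerSeries k)
        + ((PowerSeries.X : PowerSeries k) ^ 3) ⊗ₜ[cubesSubalgebra k] ((PowerSeries.X : PowerSeries k) ^ 2) := by
    rw [hd, add_mul, add_mul]
    simp only [Algebra.TensorProduct.tmul_mul_tmul, one_mul, mul_one]
    rw [show (PowerSeries.X * PowerSeries.X ^ 3 : PowerSeries k) = PowerSeries.X ^ 4 by ring,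
      show ((PowerSeries.X : PowerSeries k) ^ 2 * PowerSeries.X ^ 3 : PowerSeries k) = PowerSeries.X ^ 5 by ring]
    have hm1 := hmove 2 0
    have hm2 := hmove 1 1
    have hm3 := hmove 0 2
    norm_num at hm1 hm2 hm3
    rw [hm1, hm2, hm3]
  have hX3mem : ((PowerSeries.X : PowerSeries k) ^ 3 : PowerSeries k) ∈ V := by
    have := h3 1; rwa [mul_one] at this
  have hX4mem : ((PowerSeries.X : PowerSeries k) ^ 4 : PowerSeries k) ∈ V := by
    have := h3 PowerSeries.X
    rwa [show PowerSeries.X ^ 3 * PowerSeries.X = ((PowerSeries.X : PowerSeries k) ^ 4 : PowerSeries k)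
      by ring] at this
  have hX5mem : ((PowerSeries.X : PowerSeries k) ^ 5 : PowerSeries k) ∈ V := by
    have := h3 ((PowerSeries.X : PowerSeries k) ^ 2)
    rwa [show PowerSeries.X ^ 3 * PowerSeries.X ^ 2 = ((PowerSeries.X : PowerSeries k) ^ 5 : PowerSeries k)
      by ring] at this
  have hpow2 : ((1 : PowerSeries k) ⊗ₜ[cubesSubalgebra k] (PowerSeries.X : PowerSeries k)) ^ 2
      = (1 : PowerSeries k) ⊗ₜ[cubesSubalgebra k] ((PowerSeries.X : PowerSeries k) ^ 2) := by
    rw [Algebra.TensorProduct.tmul_pow, one_pow]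
  have hpow3 : ((1 : PowerSeries k) ⊗ₜ[cubesSubalgebra k] (PowerSeries.X : PowerSeries k)) ^ 3
      = (1 : PowerSeries k) ⊗ₜ[cubesSubalgebra k] ((PowerSeries.X : PowerSeries k) ^ 3) := by
    rw [Algebra.TensorProduct.tmul_pow, one_pow]
  refine ⟨?_, ⟨?_, ?_⟩, ⟨?_, ?_⟩, ?_⟩
  · -- (a)
    intro hmem
    have e0 := S17.phi_image V h3 0 (by norm_num) _ hmem
    have e1 := S17.phi_image V h3 1 (by norm_num) _ hmem
    have e2 := S17.phi_image V h3 2 (by norm_num) _ hmem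
    rw [hd] at e0 e1 e2
    simp only [map_add, S17.phi_tmul, PowerSeries.coeff_one, PowerSeries.coeff_X,
      PowerSeries.coeff_X_pow] at e0 e1 e2
    norm_num at e0 e1 e2
    have hmem2 : ((PowerSeries.X : PowerSeries k) ^ 2 : PowerSeries k) ∈ V := e0
    have hmem1 : (PowerSeries.X : PowerSeries k) ∈ V := e1
    have hmem0 : (1 : PowerSeries k) ∈ V := e2
    refine S17.not_all_mem V hV fun b => ?_
    have hdvd : (PowerSeries.X : PowerSeries k) ^ 3 ∣
        (b - (PowerSeries.C (R := k) (PowerSeries.coeff (R := k) 0 b)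
          + PowerSeries.C (R := k) (PowerSeries.coeff (R := k) 1 b) * PowerSeries.X
          + PowerSeries.C (R := k) (PowerSeries.coeff (R := k) 2 b) * PowerSeries.X ^ 2)) := by
      rw [PowerSeries.X_pow_dvd_iff]
      intro m hm
      interval_cases m <;>
        simp [PowerSeries.coeff_C, PowerSeries.coeff_C_mul, PowerSeries.coeff_X,
          PowerSeries.coeff_X_pow]
    obtain ⟨dd, hdd⟩ := hdvd
    have hb : b = PowerSeries.C (R := k) (PowerSeries.coeff (R := k) 0 b) * 1
        + PowerSeries.C (R := k) (PowerSeries.coeff (R := k) 1 b) * PowerSeries.X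
        + PowerSeries.C (R := k) (PowerSeries.coeff (R := k) 2 b) * PowerSeries.X ^ 2
        + PowerSeries.X ^ 3 * dd := by linear_combination hdd
    rw [hb]
    refine add_mem (add_mem (add_mem ?_ ?_) ?_) (h3 dd)
    · have := V.smul_mem ⟨_, S17.C_mem (PowerSeries.coeff (R := k) 0 b)⟩ hmem0
      rwa [S17.coe_smul] at this
    · have := V.smul_mem ⟨_, S17.C_mem (PowerSeries.coeff (R := k) 1 b)⟩ hmem1
      rwa [S17.coe_smul] at this
    · have := V.smul_mem ⟨_, S17.C_mem (PowerSeries.coeff (R := k) 2 b)⟩ hmem2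
      rwa [S17.coe_smul] at this
  · -- (b) forward
    intro hmem
    have e1 := S17.phi_image V h3 1 (by norm_num) _ hmem
    have e2 := S17.phi_image V h3 2 (by norm_num) _ hmem
    rw [hE1] at e1 e2
    simp only [map_add, S17.phi_tmul, PowerSeries.coeff_X, PowerSeries.coeff_X_pow] at e1 e2
    norm_num at e1 e2
    exact ⟨e2, e1⟩
  · -- (b) backward
    rintro ⟨hX, hX2⟩
    refine (S17.mem_tensorImage_iff V _).mpr ⟨(⟨PowerSeries.X ^ 2, hX2⟩ : V) ⊗ₜ[cubesSubalgebra k] (PowerSeries.X : PowerSeries k)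
      + (⟨PowerSeries.X, hX⟩ : V) ⊗ₜ[cubesSubalgebra k] ((PowerSeries.X : PowerSeries k) ^ 2)
      + (⟨PowerSeries.X ^ 3, hX3mem⟩ : V) ⊗ₜ[cubesSubalgebra k] (1 : PowerSeries k), ?_⟩
    rw [hE1']
    simp only [map_add, TensorProduct.map_tmul, Submodule.coe_subtype, LinearMap.id_coe, id_eq]
  · -- (c) forward
    intro hmem
    have e2 := S17.phi_image V h3 2 (by norm_num) _ hmem
    rw [hpow2, hE2] at e2
    simp only [map_add, S17.phi_tmul, PowerSeries.coeff_X, PowerSeries.coeff_X_pow] at e2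
    norm_num at e2
    exact e2
  · -- (c) backward
    intro hX2
    refine (S17.mem_tensorImage_iff V _).mpr ⟨(⟨PowerSeries.X ^ 2, hX2⟩ : V) ⊗ₜ[cubesSubalgebra k] ((PowerSeries.X : PowerSeries k) ^ 2)
      + (⟨PowerSeries.X ^ 4, hX4mem⟩ : V) ⊗ₜ[cubesSubalgebra k] (1 : PowerSeries k)
      + (⟨PowerSeries.X ^ 3, hX3mem⟩ : V) ⊗ₜ[cubesSubalgebra k] (PowerSeries.X : PowerSeries k), ?_⟩
    rw [hpow2, hE2']
    simp only [map_add, TensorProduct.map_tmul, Submodule.coe_subtype, LinearMap.id_coe, id_eq]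
  · -- (d)
    refine (S17.mem_tensorImage_iff V _).mpr ⟨(⟨PowerSeries.X ^ 5, hX5mem⟩ : V) ⊗ₜ[cubesSubalgebra k] (1 : PowerSeries k)
      + (⟨PowerSeries.X ^ 4, hX4mem⟩ : V) ⊗ₜ[cubesSubalgebra k] (PowerSeries.X : PowerSeries k)
      + (⟨PowerSeries.X ^ 3, hX3mem⟩ : V) ⊗ₜ[cubesSubalgebra k] ((PowerSeries.X : PowerSeries k) ^ 2), ?_⟩
    rw [hpow3, hE3]
    simp only [map_add, TensorProduct.map_tmul, Submodule.coe_subtype, LinearMap.id_coe, id_eq]
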